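/- Let H be a real Hilbert space and let φ₁,…,φ_t, φ̃₁,…,φ̃_t ∈ H satisfy ‖φ_i‖ ≤ M₀ and ‖φ̃_i - φ_i‖² ≤ ν for all i, with ν ≥ 0. Define Σ̂ = (1/t)∑_i φ_i ⊗ φ_i and Σ̃ = (1/t)∑_i φ̃_i ⊗ φ̃_i. Then ‖Σ̃ - Σ̂‖_HS ≤ ν + 2 M₀ √ν. -/

import Mathlib

open scoped RealInnerProductSpace ENNReal
open Finset

variable {H : Type*} [NormedAddCommGroup H] [InnerProductSpace ℝ H]

/-- The rank-one operator `x ⊗ y`, acting as `w ↦ ⟪y, w⟫ • x`. -/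
noncomputable def rankOne (x y : H) : H →L[ℝ] H :=
  (innerSL ℝ y).smulRight x

/-- The Hilbert–Schmidt norm of an operator with respect to a Hilbert basis. -/
noncomputable def hsNorm {ι : Type*} (b : HilbertBasis ι ℝ H) (T : H →L[ℝ] H) : ℝ :=
  Real.sqrt (∑' i, ‖T (b i)‖ ^ 2)

section aux
set_option linter.unusedSectionVars false
variable {ι : Type*} (b : HilbertBasis ι ℝ H)

lemma rankOne_apply (x y w : H) : rankOne x y w = ⟪y, w⟫ • x := rfl

lemma summable_rankOne (x y : H) :
    Summable (fun i => ‖rankOne x y (b i)‖ ^ 2) := by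
  have h : ∀ i, ‖rankOne x y (b i)‖ ^ 2 = (⟪y, b i⟫ * ⟪b i, y⟫) * ‖x‖ ^ 2 := by
    intro i
    rw [rankOne_apply, norm_smul, mul_pow, real_inner_comm y (b i)]
    simp [sq, abs_mul_abs_self, Real.norm_eq_abs]
  simpa only [h] using (b.summable_inner_mul_inner y y).mul_right (‖x‖ ^ 2)

lemma tsum_rankOne (x y : H) :
    ∑' i, ‖rankOne x y (b i)‖ ^ 2 = ‖y‖ ^ 2 * ‖x‖ ^ 2 := by
  have h : ∀ i, ‖rankOne x y (b i)‖ ^ 2 = (⟪y, b i⟫ * ⟪b i, y⟫) * ‖x‖ ^ 2 := by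
    intro i
    rw [rankOne_apply, norm_smul, mul_pow, real_inner_comm y (b i)]
    simp [sq, abs_mul_abs_self, Real.norm_eq_abs]
  simp only [h]
  rw [tsum_mul_right, b.tsum_inner_mul_inner, real_inner_self_eq_norm_sq]

lemma hsNorm_rankOne (x y : H) : hsNorm b (rankOne x y) = ‖y‖ * ‖x‖ := by
  rw [hsNorm, tsum_rankOne, ← mul_pow, Real.sqrt_sq (by positivity)]

lemma memℓp_of_sq (f : ι → H) (hf : Summable fun i => ‖f i‖ ^ 2) :
    Memℓp f 2 := by
  apply memℓp_gen
  have : (2 : ℝ≥0∞).toReal = (2 : ℕ) := by norm_num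
  rw [this]
  simpa [Real.rpow_natCast] using hf

lemma sqrt_tsum_eq_norm (f : ι → H) (hf : Summable fun i => ‖f i‖ ^ 2) :
    Real.sqrt (∑' i, ‖f i‖ ^ 2) = ‖(⟨f, memℓp_of_sq f hf⟩ : lp (fun _ : ι => H) 2)‖ := by
  rw [lp.norm_eq_tsum_rpow (by norm_num)]
  have h2 : (2 : ℝ≥0∞).toReal = (2 : ℝ) := by norm_num
  rw [h2]
  rw [Real.sqrt_eq_rpow]
  congr 1
  · exact tsum_congr fun i => by
      rw [← Real.rpow_natCast (‖_‖) 2]; norm_num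

lemma hsNorm_add_le (S T : H →L[ℝ] H)
    (hS : Summable fun i => ‖S (b i)‖ ^ 2) (hT : Summable fun i => ‖T (b i)‖ ^ 2)
    (hST : Summable fun i => ‖(S + T) (b i)‖ ^ 2) :
    hsNorm b (S + T) ≤ hsNorm b S + hsNorm b T := by
  rw [hsNorm, hsNorm, hsNorm, sqrt_tsum_eq_norm _ hST, sqrt_tsum_eq_norm _ hS,
    sqrt_tsum_eq_norm _ hT]
  have : (⟨fun i => (S + T) (b i), memℓp_of_sq _ hST⟩ : lp (fun _ : ι => H) 2)
      = ⟨fun i => S (b i), memℓp_of_sq _ hS⟩ + ⟨fun i => T (b i), memℓp_of_sq _ hT⟩ := by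
    ext i
    simp [lp.coeFn_add]
    rfl
  rw [this]
  exact norm_add_le _ _

lemma summable_sq_add (S T : H →L[ℝ] H)
    (hS : Summable fun i => ‖S (b i)‖ ^ 2) (hT : Summable fun i => ‖T (b i)‖ ^ 2) :
    Summable fun i => ‖(S + T) (b i)‖ ^ 2 := by
  have hle : ∀ i, ‖(S + T) (b i)‖ ^ 2 ≤ 2 * (‖S (b i)‖ ^ 2 + ‖T (b i)‖ ^ 2) := by
    intro i
    have h : ‖(S + T) (b i)‖ ≤ ‖S (b i)‖ + ‖T (b i)‖ := by
      rw [ContinuousLinearMap.add_apply]; exact norm_add_le _ _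
    nlinarith [sq_nonneg (‖S (b i)‖ - ‖T (b i)‖), norm_nonneg (S (b i)),
      norm_nonneg (T (b i)), norm_nonneg ((S + T) (b i)), sq_nonneg (‖S (b i)‖ + ‖T (b i)‖)]
  exact Summable.of_nonneg_of_le (fun i => by positivity) hle ((hS.add hT).mul_left 2)

lemma hsNorm_smul (c : ℝ) (T : H →L[ℝ] H) :
    hsNorm b (c • T) = |c| * hsNorm b T := by
  simp only [hsNorm, ContinuousLinearMap.coe_smul', Pi.smul_apply, norm_smul,
    Real.norm_eq_abs, mul_pow, sq_abs]
  rw [tsum_mul_left, Real.sqrt_mul (sq_nonneg c), Real.sqrt_sq_eq_abs]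


lemma summable_sq_sum {κ : Type*} (s : Finset κ) (T : κ → H →L[ℝ] H)
    (h : ∀ j ∈ s, Summable fun i => ‖T j (b i)‖ ^ 2) :
    Summable fun i => ‖(∑ j ∈ s, T j) (b i)‖ ^ 2 := by
  classical
  induction s using Finset.induction with
  | empty => simpa using summable_zero
  | @insert a s hj ih =>
    rw [Finset.sum_insert hj]
    exact summable_sq_add b _ _ (h a (mem_insert_self a s))
      (ih fun j hjs => h j (mem_insert_of_mem hjs))

lemma hsNorm_sum_le {κ : Type*} (s : Finset κ) (T : κ → H →L[ℝ] H)
    (h : ∀ j ∈ s, Summable fun i => ‖T j (b i)‖ ^ 2) :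
    hsNorm b (∑ j ∈ s, T j) ≤ ∑ j ∈ s, hsNorm b (T j) := by
  classical
  induction s using Finset.induction with
  | empty => simp [hsNorm]
  | @insert a s hj ih =>
    rw [Finset.sum_insert hj, Finset.sum_insert hj]
    have h1 := h a (mem_insert_self a s)
    have h2 : ∀ j ∈ s, Summable fun i => ‖T j (b i)‖ ^ 2 :=
      fun j hjs => h j (mem_insert_of_mem hjs)
    calc hsNorm b (T a + ∑ j ∈ s, T j)
        ≤ hsNorm b (T a) + hsNorm b (∑ j ∈ s, T j) :=
          hsNorm_add_le b _ _ h1 (summable_sq_sum b s T h2)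
            (summable_sq_add b _ _ h1 (summable_sq_sum b s T h2))
      _ ≤ hsNorm b (T a) + ∑ j ∈ s, hsNorm b (T j) := by linarith [ih h2]

lemma rankOne_decomp (x y : H) :
    rankOne y y - rankOne x x
      = rankOne x (y - x) + rankOne (y - x) x + rankOne (y - x) (y - x) := by
  ext w
  simp only [ContinuousLinearMap.sub_apply, ContinuousLinearMap.add_apply, rankOne_apply,
    inner_sub_left]
  module
end aux

theorem covariance_dictionary_error [CompleteSpace H] {ι : Type*} (b : HilbertBasis ι ℝ H)
    {t : ℕ} (ht : 0 < t) (φ φtil : Fin t → H) (M₀ ν : ℝ) (hν : 0 ≤ ν)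
    (hφ : ∀ i, ‖φ i‖ ≤ M₀) (hres : ∀ i, ‖φtil i - φ i‖ ^ 2 ≤ ν)
    (Sighat Sigtil : H →L[ℝ] H)
    (hSighat : Sighat = (t : ℝ)⁻¹ • ∑ i, rankOne (φ i) (φ i))
    (hSigtil : Sigtil = (t : ℝ)⁻¹ • ∑ i, rankOne (φtil i) (φtil i)) :
    hsNorm b (Sigtil - Sighat) ≤ ν + 2 * M₀ * Real.sqrt ν := by
  haveI : Nonempty (Fin t) := ⟨⟨0, ht⟩⟩
  have hM₀ : 0 ≤ M₀ := le_trans (norm_nonneg _) (hφ ⟨0, ht⟩)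
  set r : Fin t → H := fun i => φtil i - φ i with hr
  set D : Fin t → (H →L[ℝ] H) := fun i =>
    rankOne (φ i) (r i) + rankOne (r i) (φ i) + rankOne (r i) (r i) with hD
  have hrb : ∀ i, ‖r i‖ ≤ Real.sqrt ν := fun i => Real.le_sqrt_of_sq_le (hres i)
  -- summability facts
  have hsum : ∀ i : Fin t, Summable fun j => ‖D i (b j)‖ ^ 2 := by
    intro i
    exact summable_sq_add b _ _
      (summable_sq_add b _ _ (summable_rankOne b _ _) (summable_rankOne b _ _))
      (summable_rankOne b _ _)
  have hDbound : ∀ i : Fin t, hsNorm b (D i) ≤ ν + 2 * M₀ * Real.sqrt ν := by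
    intro i
    have h1 := summable_rankOne b (φ i) (r i)
    have h2 := summable_rankOne b (r i) (φ i)
    have h3 := summable_rankOne b (r i) (r i)
    have step1 : hsNorm b (D i)
        ≤ hsNorm b (rankOne (φ i) (r i)) + hsNorm b (rankOne (r i) (φ i))
          + hsNorm b (rankOne (r i) (r i)) := by
      calc hsNorm b (D i)
          ≤ hsNorm b (rankOne (φ i) (r i) + rankOne (r i) (φ i))
            + hsNorm b (rankOne (r i) (r i)) :=
            hsNorm_add_le b _ _ (summable_sq_add b _ _ h1 h2) h3
              (summable_sq_add b _ _ (summable_sq_add b _ _ h1 h2) h3)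
        _ ≤ _ := by
            have := hsNorm_add_le b _ _ h1 h2 (summable_sq_add b _ _ h1 h2)
            linarith
    rw [hsNorm_rankOne, hsNorm_rankOne, hsNorm_rankOne] at step1
    have e1 : ‖r i‖ * ‖φ i‖ ≤ Real.sqrt ν * M₀ :=
      mul_le_mul (hrb i) (hφ i) (norm_nonneg _) (Real.sqrt_nonneg ν)
    have e2 : ‖φ i‖ * ‖r i‖ ≤ M₀ * Real.sqrt ν :=
      mul_le_mul (hφ i) (hrb i) (norm_nonneg _) hM₀
    have e3 : ‖r i‖ * ‖r i‖ ≤ ν := by rw [← sq]; exact hres i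
    calc hsNorm b (D i) ≤ _ := step1
      _ ≤ Real.sqrt ν * M₀ + M₀ * Real.sqrt ν + ν := by linarith
      _ = ν + 2 * M₀ * Real.sqrt ν := by ring
  have hdecomp : Sigtil - Sighat = (t : ℝ)⁻¹ • ∑ i, D i := by
    rw [hSigtil, hSighat, ← smul_sub, ← Finset.sum_sub_distrib]
    congr 1
    exact Finset.sum_congr rfl fun i _ => rankOne_decomp (φ i) (φtil i)
  rw [hdecomp, hsNorm_smul]
  have ht' : (0 : ℝ) < t := by exact_mod_cast ht
  rw [abs_of_nonneg (by positivity)]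
  calc (t : ℝ)⁻¹ * hsNorm b (∑ i, D i)
      ≤ (t : ℝ)⁻¹ * ∑ i, hsNorm b (D i) := by
        apply mul_le_mul_of_nonneg_left _ (by positivity)
        exact hsNorm_sum_le b _ _ fun j _ => hsum j
    _ ≤ (t : ℝ)⁻¹ * ∑ _i : Fin t, (ν + 2 * M₀ * Real.sqrt ν) := by
        apply mul_le_mul_of_nonneg_left _ (by positivity)
        exact Finset.sum_le_sum fun i _ => hDbound i
    _ = ν + 2 * M₀ * Real.sqrt ν := by
        rw [Finset.sum_const, card_univ, Fintype.card_fin, nsmul_eq_mul]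
        field_simp
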